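/- (Giambelli identity for Schur polynomials) For a partition λ with Frobenius coordinates (α_1,...,α_r | β_1,...,β_r), the Schur polynomial satisfies s_λ = det( s_{(α_i | β_j)} )_{1≤i,j≤r}, where (α|β) denotes the hook partition with arm α and leg β. -/

import Mathlib

open Finset

/-- The Schur polynomial in `n` variables, via Jacobi's bialternant formula:
`s_μ(x) = det(x_j^{μ_k - k + n}) / det(x_j^{n - k})` (indices `0`-based). -/
noncomputable def schurPoly {F : Type*} [Field F] (n : ℕ) (μ : Fin n → ℕ)
    (x : Fin n → F) : F :=
  Matrix.det (Matrix.of fun j k : Fin n => x j ^ (μ k + (n - 1 - k.val))) /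
    Matrix.det (Matrix.of fun j k : Fin n => x j ^ (n - 1 - k.val))

/-- The hook partition `(a|b) = (a+1, 1^b)` with at most `n` parts. -/
def hookPartition (n a b : ℕ) : Fin n → ℕ :=
  fun k => if k.val = 0 then a + 1 else if k.val ≤ b then 1 else 0

section GiambelliAux

open Matrix

variable {F : Type*} [Field F]

/-- Determinant of a matrix that is the identity outside the columns in the range of `p`
equals the determinant of the `r × r` minor on rows/columns `p`. -/
lemma giambelli_det_eq_minor_of_id_outside {n r : ℕ} (M : Matrix (Fin n) (Fin n) F)
    (p : Fin r → Fin n) (hp : Function.Injective p)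
    (hM : ∀ k k' : Fin n, (¬ ∃ i, p i = k') → M k k' = if k = k' then 1 else 0) :
    M.det = Matrix.det (Matrix.of fun i j : Fin r => M (p i) (p j)) := by
  classical
  let e : (Fin r ⊕ {k : Fin n // ¬ k ∈ Set.range p}) ≃ Fin n :=
    (Equiv.sumCongr (Equiv.ofInjective p hp) (Equiv.refl _)).trans
      (Equiv.sumCompl (· ∈ Set.range p))
  have he1 : ∀ i : Fin r, e (Sum.inl i) = p i := fun i => rfl
  have he2 : ∀ c : {k : Fin n // ¬ k ∈ Set.range p}, e (Sum.inr c) = c.1 := fun c => rfl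
  rw [← Matrix.det_submatrix_equiv_self e M]
  have : M.submatrix e e =
      Matrix.fromBlocks (Matrix.of fun i j : Fin r => M (p i) (p j)) 0
        (Matrix.of fun c j => M c.1 (p j)) 1 := by
    ext a b
    cases a with
    | inl i =>
      cases b with
      | inl j => simp [Matrix.submatrix_apply, he1]
      | inr c =>
        simp only [Matrix.submatrix_apply, he1, he2, Matrix.fromBlocks_apply₁₂,
          Matrix.zero_apply]
        rw [hM _ _ (by simpa [Set.mem_range] using c.2)]
        have : p i ≠ c.1 := fun h => c.2 ⟨i, h⟩
        simp [this]
    | inr c =>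
      cases b with
      | inl j => simp [Matrix.submatrix_apply, he1, he2]
      | inr c' =>
        simp only [Matrix.submatrix_apply, he2, Matrix.fromBlocks_apply₂₂]
        rw [hM _ _ (by simpa [Set.mem_range] using c'.2)]
        rw [Matrix.one_apply]
        by_cases h : c = c'
        · simp [h]
        · have h1 : c.1 ≠ c'.1 := fun hh => h (Subtype.ext hh)
          simp [h, h1]
  rw [this, Matrix.det_fromBlocks_zero₁₂]
  simp

/-- A Sylvester-type determinantal identity. -/
lemma giambelli_sylvester_identity {n r : ℕ} (A : Matrix (Fin n) (Fin n) F) (hA : A.det ≠ 0)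
    (u : Fin r → Fin n → F) (p : Fin r → Fin n) (hp : Function.Injective p) :
    A.det * Matrix.det (Matrix.of fun i j : Fin r => (A.updateCol (p j) (u i)).det)
      = A.det ^ r * Matrix.det (Matrix.of fun j k : Fin n =>
          Function.extend p (fun i => u i j) (fun k' => A j k') k) := by
  classical
  have hAu : IsUnit A.det := hA.isUnit
  set K : Matrix (Fin r) (Fin r) F := Matrix.of fun i j : Fin r => (A⁻¹ *ᵥ u i) (p j) with hK
  have hD : ∀ i j : Fin r, (A.updateCol (p j) (u i)).det = A.det * K i j := by
    intro i j
    rw [← Matrix.cramer_apply, Matrix.cramer_eq_adjugate_mulVec]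
    have : A⁻¹ = (A.det)⁻¹ • A.adjugate := by
      rw [Matrix.inv_def, Ring.inverse_eq_inv]
    simp only [hK, Matrix.of_apply, this]
    rw [Matrix.smul_mulVec]
    simp [Pi.smul_apply, smul_eq_mul]
    field_simp
  have hDdet : Matrix.det (Matrix.of fun i j : Fin r => (A.updateCol (p j) (u i)).det)
      = A.det ^ r * K.det := by
    have : (Matrix.of fun i j : Fin r => (A.updateCol (p j) (u i)).det) = A.det • K := by
      ext i j
      simp [hD i j]
    rw [this, Matrix.det_smul, Fintype.card_fin]
  set M : Matrix (Fin n) (Fin n) F := Matrix.of fun k k' =>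
    Function.extend p (fun i => (A⁻¹ *ᵥ u i) k) (fun k'' => if k = k'' then (1:F) else 0) k'
    with hM
  have hR : (Matrix.of fun j k : Fin n =>
      Function.extend p (fun i => u i j) (fun k' => A j k') k) = A * M := by
    ext j k
    rw [Matrix.mul_apply]
    by_cases h : ∃ i, p i = k
    · obtain ⟨i, rfl⟩ := h
      rw [Matrix.of_apply, hp.extend_apply]
      have : ∀ m, M m (p i) = (A⁻¹ *ᵥ u i) m := by
        intro m; rw [hM, Matrix.of_apply, hp.extend_apply]
      simp_rw [this]
      have : ∑ m, A j m * (A⁻¹ *ᵥ u i) m = (A *ᵥ (A⁻¹ *ᵥ u i)) j := by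
        rw [Matrix.mulVec]
        rfl
      rw [this, Matrix.mulVec_mulVec, Matrix.mul_nonsing_inv _ hAu, Matrix.one_mulVec]
    · rw [Matrix.of_apply, Function.extend_apply' _ _ _ h]
      have : ∀ m, M m k = if m = k then (1:F) else 0 := by
        intro m; rw [hM, Matrix.of_apply, Function.extend_apply' _ _ _ h]
      simp_rw [this, mul_ite, mul_one, mul_zero]
      simp
  have hMdet : M.det = K.det := by
    rw [giambelli_det_eq_minor_of_id_outside M p hp]
    · have : (Matrix.of fun i j : Fin r => M (p i) (p j)) = Kᵀ := by
        ext i j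
        rw [Matrix.transpose_apply, hM]
        simp only [Matrix.of_apply]
        rw [hp.extend_apply]
        rfl
      rw [this, Matrix.det_transpose]
    · intro k k' h
      rw [hM, Matrix.of_apply, Function.extend_apply' _ _ _ h]
  rw [hDdet, hR, Matrix.det_mul, hMdet]
  ring

lemma giambelli_fin_sub_val {n : ℕ} (k j : Fin n) :
    (k - j).val = if j.val ≤ k.val then k.val - j.val else k.val + n - j.val := by
  rw [Fin.sub_def]
  simp only []
  have hj := j.isLt
  have hk := k.isLt
  rcases le_or_gt j.val k.val with h | h
  · rw [if_pos h]
    have h1 : n - j.val + k.val = (k.val - j.val) + n := by omega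
    rw [h1, Nat.add_mod_right, Nat.mod_eq_of_lt (by omega)]
  · rw [if_neg (by omega)]
    rw [Nat.mod_eq_of_lt (by omega)]
    omega

lemma giambelli_fin_add_val' {n : ℕ} (k j : Fin n) (h : k.val + j.val < n) :
    (k + j).val = k.val + j.val := by
  rw [Fin.add_def]
  exact Nat.mod_eq_of_lt h

lemma giambelli_cycleRange_inv_of_gt {n : ℕ} {i j : Fin n} (h : i < j) :
    (Fin.cycleRange i)⁻¹ j = j := by
  rcases n with _ | m
  · exact j.elim0
  rw [Equiv.Perm.inv_eq_iff_eq, Fin.cycleRange_of_gt h]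

lemma giambelli_cycleRange_inv_zero {n : ℕ} [NeZero n] (i : Fin n) :
    (Fin.cycleRange i)⁻¹ 0 = i := by
  rcases n with _ | m
  · exact i.elim0
  rw [Equiv.Perm.inv_eq_iff_eq, Fin.cycleRange_of_eq rfl]

lemma giambelli_cycleRange_inv_of_le {n : ℕ} {i j : Fin n} (h1 : 0 < j.val) (h2 : j ≤ i) :
    (Fin.cycleRange i)⁻¹ j = ⟨j.val - 1, by omega⟩ := by
  rcases n with _ | m
  · exact i.elim0
  rw [Equiv.Perm.inv_eq_iff_eq]
  have hlt : (⟨j.val - 1, by omega⟩ : Fin (m+1)) < i := by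
    rw [Fin.lt_iff_val_lt_val]
    simp only []
    have := Fin.le_iff_val_le_val.mp h2
    omega
  rw [Fin.cycleRange_of_lt hlt]
  rcases m with _ | m'
  · have hj := j.isLt
    omega
  apply Fin.ext
  rw [Fin.val_add, Fin.val_one]
  simp only []
  have hj := j.isLt
  rw [Nat.mod_eq_of_lt (by omega)]
  omega

/-- the conjugated cycle: acts on the window `[j, j+m]` as `j ↦ j+m, k ↦ k-1`. -/
def giambelliShiftCycle {n : ℕ} [NeZero n] (j m : Fin n) : Equiv.Perm (Fin n) :=
  (Equiv.addRight j) * (Fin.cycleRange m)⁻¹ * (Equiv.addRight j)⁻¹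

lemma giambelliShiftCycle_sign {n : ℕ} [NeZero n] (j m : Fin n) :
    Equiv.Perm.sign (giambelliShiftCycle j m) = (-1) ^ m.val := by
  unfold giambelliShiftCycle
  rw [_root_.map_mul, _root_.map_mul, _root_.map_inv, _root_.map_inv, Fin.sign_cycleRange]
  have : ∀ u : ℤˣ, u * ((-1)^m.val)⁻¹ * u⁻¹ = ((-1:ℤˣ)^m.val)⁻¹ := by
    intro u
    rw [mul_comm u, mul_assoc, mul_inv_cancel, mul_one]
  rw [this]
  simp [inv_pow]

lemma giambelliShiftCycle_apply {n : ℕ} [NeZero n] (j m : Fin n)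
    (hjm : j.val + m.val < n) (k : Fin n) :
    giambelliShiftCycle j m k =
      if k.val < j.val then k
      else if k.val = j.val then ⟨j.val + m.val, hjm⟩
      else if k.val ≤ j.val + m.val then ⟨k.val - 1, by omega⟩
      else k := by
  unfold giambelliShiftCycle
  simp only [Equiv.Perm.mul_apply]
  have hsymm : (Equiv.addRight j)⁻¹ k = k - j := by
    rw [Equiv.neg_addRight]
    show k + -j = k - j
    rw [sub_eq_add_neg]
  have happ : ∀ z : Fin n, (Equiv.addRight j) z = z + j := fun z => rfl
  rw [hsymm]
  have hsub := giambelli_fin_sub_val k j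
  rcases lt_trichotomy k.val j.val with h | h | h
  · rw [if_pos h]
    have hv : (k - j).val = k.val + n - j.val := by rw [hsub, if_neg (by omega)]
    have hgt : m < k - j := by
      rw [Fin.lt_iff_val_lt_val, hv]; omega
    rw [giambelli_cycleRange_inv_of_gt hgt, happ]
    apply Fin.ext
    rw [Fin.val_add, hv]
    have : k.val + n - j.val + j.val = k.val + n := by omega
    rw [this, Nat.add_mod_right, Nat.mod_eq_of_lt k.isLt]
  · rw [if_neg (by omega), if_pos h]
    have hv : (k - j) = 0 := by
      apply Fin.ext
      rw [hsub, if_pos (by omega)]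
      simp [h]
    rw [hv, giambelli_cycleRange_inv_zero, happ]
    apply Fin.ext
    rw [giambelli_fin_add_val' m j (by omega)]
    simp only []
    omega
  · rw [if_neg (by omega), if_neg (by omega)]
    have hv : (k - j).val = k.val - j.val := by rw [hsub, if_pos (by omega)]
    rcases le_or_gt k.val (j.val + m.val) with h2 | h2
    · rw [if_pos h2]
      have hle : k - j ≤ m := by
        rw [Fin.le_iff_val_le_val, hv]; omega
      rw [giambelli_cycleRange_inv_of_le (by rw [hv]; omega) hle, happ]
      apply Fin.ext
      rw [giambelli_fin_add_val']
      · simp only [hv]; omega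
      · simp only [hv]; omega
    · rw [if_neg (by omega)]
      have hgt : m < k - j := by rw [Fin.lt_iff_val_lt_val, hv]; omega
      rw [giambelli_cycleRange_inv_of_gt hgt, happ]
      apply Fin.ext
      rw [Fin.val_add, hv]
      have : k.val - j.val + j.val = k.val := by omega
      rw [this, Nat.mod_eq_of_lt k.isLt]

lemma giambelli_filter_card_threshold {n : ℕ} {l : Fin n → ℕ} (hl : Antitone l) {m N : ℕ}
    (hcard : (univ.filter fun a : Fin n => m ≤ l a).card = N) (a : Fin n) :
    m ≤ l a ↔ a.val < N := by
  constructor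
  · intro h
    have hsub : Finset.Iic a ⊆ univ.filter fun b : Fin n => m ≤ l b := by
      intro b hb
      simp only [Finset.mem_Iic] at hb
      simp only [Finset.mem_filter, Finset.mem_univ, true_and]
      exact le_trans h (hl hb)
    have := Finset.card_le_card hsub
    rw [hcard, Fin.card_Iic] at this
    omega
  · intro h
    by_contra hc
    push_neg at hc
    have hsub : (univ.filter fun b : Fin n => m ≤ l b) ⊆ Finset.Iio a := by
      intro b hb
      simp only [Finset.mem_filter, Finset.mem_univ, true_and] at hb
      simp only [Finset.mem_Iio]
      by_contra hba
      push_neg at hba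
      have : l b ≤ l a := hl hba
      omega
    have := Finset.card_le_card hsub
    rw [hcard, Fin.card_Iio] at this
    omega

lemma giambelli_hook_det {n : ℕ} (x : Fin n → F) (a b : ℕ) (hb : b + 1 ≤ n) :
    Matrix.det (Matrix.of fun jr k : Fin n =>
        x jr ^ (hookPartition n a b k + (n - 1 - k.val)))
      = (-1 : F) ^ b *
        Matrix.det ((Matrix.of fun jr k : Fin n => x jr ^ (n - 1 - k.val)).updateCol
          ⟨b, by omega⟩ (fun jr => x jr ^ (a + n))) := by
  rcases n with _ | m
  · omega
  set bfin : Fin (m + 1) := ⟨b, by omega⟩ with hbfin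
  set Hm : Matrix (Fin (m + 1)) (Fin (m + 1)) F := Matrix.of fun jr k : Fin (m + 1) =>
    x jr ^ (hookPartition (m + 1) a b k + (m + 1 - 1 - k.val)) with hHm
  have hmain : Hm.submatrix id (Fin.cycleRange bfin)
      = (Matrix.of fun jr k : Fin (m + 1) => x jr ^ (m + 1 - 1 - k.val)).updateCol
          bfin (fun jr => x jr ^ (a + (m + 1))) := by
    ext jr k
    rw [Matrix.submatrix_apply, Matrix.updateCol_apply, id_eq]
    rcases lt_trichotomy k bfin with hk | hk | hk
    · have hkb : k.val < b := hk
      have hval : (Fin.cycleRange bfin k).val = k.val + 1 := Fin.coe_cycleRange_of_lt hk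
      rw [if_neg (Fin.ne_of_lt hk)]
      rw [hHm, Matrix.of_apply, Matrix.of_apply]
      unfold hookPartition
      rw [hval, if_neg (by omega), if_pos (by omega)]
      congr 1
      omega
    · have hval : Fin.cycleRange bfin k = 0 := by rw [hk]; exact Fin.cycleRange_self bfin
      rw [if_pos hk]
      rw [hHm, Matrix.of_apply, hval]
      have h0 : ((0 : Fin (m + 1)) : ℕ) = 0 := rfl
      unfold hookPartition
      rw [h0, if_pos rfl]
      congr 1
      omega
    · have hval : Fin.cycleRange bfin k = k := Fin.cycleRange_of_gt hk
      rw [if_neg (Fin.ne_of_gt hk)]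
      rw [hHm, Matrix.of_apply, Matrix.of_apply, hval]
      unfold hookPartition
      have hkb : b < k.val := hk
      rw [if_neg (by omega), if_neg (by omega), zero_add]
  have hdet := Matrix.det_permute' (Fin.cycleRange bfin) Hm
  rw [hmain] at hdet
  have hcast : (((((-1 : ℤˣ) ^ (bfin.val)) : ℤˣ) : ℤ) : F) = (-1 : F) ^ b := by
    push_cast
    norm_num
    rfl
  have hev : Even (b + b) := ⟨b, rfl⟩
  rw [hdet, Fin.sign_cycleRange, hcast, ← mul_assoc, ← pow_add, hev.neg_one_pow, one_mul]

lemma giambelli_det_A_ne_zero {n : ℕ} (x : Fin n → F) (hx : Function.Injective x) :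
    Matrix.det (Matrix.of fun j k : Fin n => x j ^ (n - 1 - k.val)) ≠ 0 := by
  have hmat : (Matrix.of fun j k : Fin n => x j ^ (n - 1 - k.val))
      = (Matrix.vandermonde x).submatrix id Fin.revPerm := by
    ext j k
    rw [Matrix.submatrix_apply, id_eq, Matrix.vandermonde_apply, Matrix.of_apply]
    congr 1
    rw [Fin.revPerm_apply, Fin.val_rev]
    omega
  rw [hmat, Matrix.det_permute', Matrix.det_vandermonde]
  apply mul_ne_zero
  · rcases Int.units_eq_one_or (Equiv.Perm.sign (Fin.revPerm : Equiv.Perm (Fin n))) with h | h <;>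
      rw [h] <;> norm_num
  · rw [Finset.prod_ne_zero_iff]
    intro i _
    rw [Finset.prod_ne_zero_iff]
    intro j hj
    rw [Finset.mem_Ioi] at hj
    exact sub_ne_zero.mpr (fun hxy => (Fin.ne_of_gt hj) (hx hxy))

end GiambelliAux

/-- Giambelli identity: for a partition `λ` with Frobenius coordinates
`(α_1, …, α_r | β_1, …, β_r)` (so `α_i = λ_i - i`, `β_i = λ'_i - i` in 1-based
indexing, `r` the Durfee rank), the Schur polynomial satisfies
`s_λ = det(s_{(α_i|β_j)})_{1 ≤ i,j ≤ r}`. -/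
theorem giambelli_identity {F : Type*} [Field F] (n r : ℕ) (hr : r ≤ n)
    (l : Fin n → ℕ) (hl : Antitone l) (x : Fin n → F) (hx : Function.Injective x)
    (α β : Fin r → ℕ)
    (hα : ∀ i : Fin r, l (Fin.castLE hr i) = α i + i.val + 1)
    (hβ : ∀ i : Fin r,
      (univ.filter (fun a : Fin n => i.val + 1 ≤ l a)).card = β i + i.val + 1)
    (hrank : ∀ i : Fin n, r ≤ i.val → l i ≤ i.val) :
    schurPoly n l x =
      Matrix.det (Matrix.of fun i j : Fin r =>
        schurPoly n (hookPartition n (α i) (β j)) x) := by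
  classical
  have hV : Matrix.det (Matrix.of fun j k : Fin n => x j ^ (n - 1 - k.val)) ≠ 0 :=
    giambelli_det_A_ne_zero x hx
  set A : Matrix (Fin n) (Fin n) F := Matrix.of fun j k : Fin n => x j ^ (n - 1 - k.val)
    with hAdef
  rcases Nat.eq_zero_or_pos r with hr0 | hrpos
  · subst hr0
    have hl0 : ∀ k : Fin n, l k = 0 := by
      intro k
      have hn : 0 < n := k.pos
      have h0 : l ⟨0, hn⟩ ≤ 0 := hrank ⟨0, hn⟩ (by omega)
      have h1 := hl (show (⟨0, hn⟩ : Fin n) ≤ k from by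
        rw [Fin.le_def]; exact Nat.zero_le _)
      omega
    have hnum : (Matrix.of fun j k : Fin n => x j ^ (l k + (n - 1 - k.val))) = A := by
      ext j k; rw [Matrix.of_apply, hl0 k, zero_add]; rfl
    simp only [schurPoly]
    rw [hnum, div_self hV, Matrix.det_isEmpty]
  -- main case : 0 < r
  haveI : NeZero n := ⟨by omega⟩
  have hβn : ∀ i : Fin r, β i + i.val + 1 ≤ n := by
    intro i
    have h1 := hβ i
    have h2 : (univ.filter fun a : Fin n => i.val + 1 ≤ l a).card ≤ n := by
      refine le_trans (Finset.card_filter_le _ _) ?_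
      simp
    omega
  have hthresh : ∀ (i : Fin r) (a : Fin n), i.val + 1 ≤ l a ↔ a.val < β i + i.val + 1 :=
    fun i a => giambelli_filter_card_threshold hl (hβ i) a
  have hβanti : ∀ i i' : Fin r, i < i' → β i' < β i := by
    intro i i' hii
    have hsub : (univ.filter fun a : Fin n => i'.val + 1 ≤ l a)
        ⊆ (univ.filter fun a : Fin n => i.val + 1 ≤ l a) := by
      intro a ha
      simp only [Finset.mem_filter, Finset.mem_univ, true_and] at ha ⊢
      have hii' : i.val < i'.val := hii
      omega
    have hcard := Finset.card_le_card hsub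
    rw [hβ i, hβ i'] at hcard
    have hiv : i.val < i'.val := hii
    omega
  set p : Fin r → Fin n := fun i => ⟨β i, by have := hβn i; omega⟩ with hp_def
  have hβinj : ∀ i i' : Fin r, β i = β i' → i = i' := by
    intro i i' h
    rcases lt_trichotomy i i' with hii | hii | hii
    · exact absurd h.symm (Nat.ne_of_lt (hβanti i i' hii))
    · exact hii
    · exact absurd h (Nat.ne_of_lt (hβanti i' i hii))
  have hp : Function.Injective p := by
    intro i i' h
    exact hβinj i i' (congrArg Fin.val h)
  have hαl : ∀ (k : Fin n) (hk : k.val < r), l k = α ⟨k.val, hk⟩ + k.val + 1 := by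
    intro k hk
    have h1 := hα ⟨k.val, hk⟩
    have hcast : Fin.castLE hr ⟨k.val, hk⟩ = k := by apply Fin.ext; rfl
    rw [hcast] at h1
    exact h1
  have hsub_lt : ∀ k : Fin n, k.val - l k < n := fun k => by have := k.isLt; omega
  set tf : Fin n → Fin n := fun k =>
    if h : k.val < r then p ⟨k.val, h⟩ else ⟨k.val - l k, hsub_lt k⟩ with htf
  have hF1 : ∀ (i : Fin r) (k : Fin n), r ≤ k.val → (β i : ℕ) ≠ k.val - l k := by
    intro i k hk heq
    have hlk := hrank k hk
    by_cases hc : i.val + 1 ≤ l k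
    · have := (hthresh i k).mp hc
      omega
    · push_neg at hc
      have h2 : k.val < β i + i.val + 1 := by omega
      have := (hthresh i k).mpr h2
      omega
  have hmono : ∀ k k' : Fin n, r ≤ k.val → k < k' → k.val - l k < k'.val - l k' := by
    intro k k' h1 h2
    have hll := hl (le_of_lt h2)
    have hlk := hrank k h1
    have h3 : k.val < k'.val := h2
    omega
  have htf_inj : Function.Injective tf := by
    intro k k' h
    rw [htf] at h
    simp only [] at h
    by_cases h1 : k.val < r <;> by_cases h2 : k'.val < r
    · rw [dif_pos h1, dif_pos h2] at h
      have h3 := hp h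
      have h4 : k.val = k'.val := by simpa [Fin.mk.injEq] using h3
      exact Fin.ext h4
    · rw [dif_pos h1, dif_neg h2] at h
      have h3 : (β ⟨k.val, h1⟩ : ℕ) = k'.val - l k' := congrArg Fin.val h
      exact absurd h3 (hF1 ⟨k.val, h1⟩ k' (by omega))
    · rw [dif_neg h1, dif_pos h2] at h
      have h3 : (β ⟨k'.val, h2⟩ : ℕ) = k.val - l k := (congrArg Fin.val h).symm
      exact absurd h3 (hF1 ⟨k'.val, h2⟩ k (by omega))
    · rw [dif_neg h1, dif_neg h2] at h
      have hv : k.val - l k = k'.val - l k' := congrArg Fin.val h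
      rcases lt_trichotomy k k' with hkk | hkk | hkk
      · exact absurd hv (Nat.ne_of_lt (hmono k k' (by omega) hkk))
      · exact hkk
      · exact absurd hv.symm (Nat.ne_of_lt (hmono k' k (by omega) hkk))
  set τ : Equiv.Perm (Fin n) :=
    Equiv.ofBijective tf (Finite.injective_iff_bijective.mp htf_inj) with hτdef
  have hτ : ∀ k, τ k = tf k := fun k => rfl
  set bv : ℕ → ℕ := (fun s => if h : s < r then β ⟨s, h⟩ else 0) with hbv
  set δ : ℕ → Equiv.Perm (Fin n) := (fun s =>
    if h : s < r then
      giambelliShiftCycle (⟨s, by omega⟩ : Fin n)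
        ⟨β ⟨s, h⟩, by have := hβn ⟨s, h⟩; omega⟩
    else 1) with hδ
  set C : ℕ → Equiv.Perm (Fin n) := (fun t => Nat.rec 1 (fun s ih => ih * δ s) t) with hCdef
  have hC0 : C 0 = 1 := rfl
  have hCs : ∀ t, C (t + 1) = C t * δ t := fun t => rfl
  have hmainind : ∀ t (htle : t ≤ r),
      (∀ (k : Fin n) (hk : k.val < t), (C t k).val = β ⟨k.val, by omega⟩)
      ∧ (∀ k k' : Fin n, t ≤ k.val → k < k' → C t k < C t k') := by
    intro t
    induction t with
    | zero =>
      intro _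
      constructor
      · intro k hk; omega
      · intro k k' _ h
        rw [hC0]
        simpa using h
    | succ t ih =>
      intro ht
      have htr : t < r := ht
      obtain ⟨ih1, ih2⟩ := ih (le_of_lt htr)
      have hβt : β ⟨t, htr⟩ + t + 1 ≤ n := hβn ⟨t, htr⟩
      have hδt : δ t = giambelliShiftCycle (⟨t, by omega⟩ : Fin n)
          ⟨β ⟨t, htr⟩, by omega⟩ := by
        rw [hδ]
        simp only []
        rw [dif_pos htr]
      have hδap : ∀ k : Fin n, δ t k =
          if k.val < t then k
          else if k.val = t then ⟨t + β ⟨t, htr⟩, by omega⟩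
          else if k.val ≤ t + β ⟨t, htr⟩ then ⟨k.val - 1, by omega⟩
          else k := by
        intro k
        rw [hδt, giambelliShiftCycle_apply _ _
          (show t + β ⟨t, htr⟩ < n by omega) k]
      have hδv : ∀ k : Fin n, (δ t k).val =
          if k.val < t then k.val
          else if k.val = t then t + β ⟨t, htr⟩
          else if k.val ≤ t + β ⟨t, htr⟩ then k.val - 1
          else k.val := by
        intro k
        rw [hδap k]
        split_ifs <;> rfl
      have key : ∀ s (hs : s ≤ β ⟨t, htr⟩), (C t ⟨t + s, by omega⟩).val = s := by
        intro s
        induction s using Nat.strong_induction_on with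
        | _ s ihs =>
          intro hs
          have hge : s ≤ (C t ⟨t + s, by omega⟩).val := by
            rcases Nat.eq_zero_or_pos s with h0 | h0
            · omega
            · have hprev := ihs (s - 1) (by omega) (by omega)
              have hlt2 : C t ⟨t + (s - 1), by omega⟩ < C t ⟨t + s, by omega⟩ := by
                apply ih2
                · show t ≤ t + (s - 1)
                  omega
                · rw [Fin.lt_def]
                  show t + (s - 1) < t + s
                  omega
              rw [Fin.lt_def] at hlt2
              omega
          obtain ⟨k, hk⟩ := (C t).surjective ⟨s, by omega⟩
          have hkv : (C t k).val = s := by rw [hk]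
          rcases lt_or_ge k.val t with hkt | hkt
          · exfalso
            have h1 := ih1 k hkt
            have h2 := hβanti ⟨k.val, by omega⟩ ⟨t, htr⟩ (by
              rw [Fin.lt_def]; exact hkt)
            omega
          · rcases lt_trichotomy k.val (t + s) with h1 | h1 | h1
            · exfalso
              have hkeq : k = ⟨t + (k.val - t), by omega⟩ := Fin.ext (by
                show k.val = t + (k.val - t); omega)
              have h2 := ihs (k.val - t) (by omega) (by omega)
              rw [← hkeq] at h2
              omega
            · have hkeq : (⟨t + s, by omega⟩ : Fin n) = k := Fin.ext (by
                show t + s = k.val; omega)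
              rw [hkeq, hkv]
            · exfalso
              have h2 : C t ⟨t + s, by omega⟩ < C t k := by
                apply ih2
                · show t ≤ t + s
                  omega
                · rw [Fin.lt_def]
                  show t + s < k.val
                  omega
              rw [Fin.lt_def] at h2
              omega
      constructor
      · intro k hk
        rw [hCs, Equiv.Perm.mul_apply, hδap k]
        rcases lt_or_eq_of_le (Nat.lt_succ_iff.mp hk) with hkt | hkt
        · rw [if_pos hkt]
          exact ih1 k hkt
        · rw [if_neg (by omega), if_pos hkt]
          have h2 := key (β ⟨t, htr⟩) le_rfl
          have hidx : (⟨k.val, by omega⟩ : Fin r) = ⟨t, htr⟩ := Fin.ext (by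
            show k.val = t; omega)
          rw [hidx]
          exact h2
      · intro k k' h1 h2
        rw [hCs, Equiv.Perm.mul_apply, Equiv.Perm.mul_apply]
        have h2v : k.val < k'.val := h2
        apply ih2
        · rw [hδv k]
          split_ifs <;> omega
        · rw [Fin.lt_def, hδv k, hδv k']
          split_ifs <;> omega
  obtain ⟨hr1, hr2⟩ := hmainind r le_rfl
  have hτlow : ∀ (k : Fin n) (hk : k.val < r), (τ k).val = β ⟨k.val, hk⟩ := by
    intro k hk
    rw [hτ, htf]
    simp only []
    rw [dif_pos hk]
  have hτmono : ∀ k k' : Fin n, r ≤ k.val → k < k' → τ k < τ k' := by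
    intro k k' h1 h2
    have h3 : k.val < k'.val := h2
    rw [hτ, hτ, htf]
    simp only []
    rw [dif_neg (by omega), dif_neg (by omega), Fin.lt_def]
    show k.val - l k < k'.val - l k'
    exact hmono k k' h1 h2
  have hchar : ∀ (σ : Equiv.Perm (Fin n)),
      (∀ (kk : Fin n) (hkk : kk.val < r), (σ kk).val = β ⟨kk.val, hkk⟩) →
      Set.range (fun s : Fin (n - r) => σ ⟨r + s.val, by have := s.isLt; omega⟩)
        = {y : Fin n | ∀ i : Fin r, y.val ≠ β i} := by
    intro σ hσ
    ext y
    simp only [Set.mem_range, Set.mem_setOf_eq]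
    constructor
    · rintro ⟨s, rfl⟩ i hyi
      have h1 := hσ ⟨i.val, by omega⟩ (show i.val < r from i.isLt)
      have h2 : σ ⟨i.val, by omega⟩ = σ ⟨r + s.val, by have := s.isLt; omega⟩ := by
        apply Fin.ext
        rw [hyi, h1]
      have h3 := σ.injective h2
      have h4 : i.val = r + s.val := by simpa [Fin.mk.injEq] using h3
      have := i.isLt
      omega
    · intro hy
      obtain ⟨k, hk⟩ := σ.surjective y
      have hkr : r ≤ k.val := by
        by_contra hc
        push_neg at hc
        exact hy ⟨k.val, hc⟩ (by rw [← hk, hσ k hc])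
      refine ⟨⟨k.val - r, by have := k.isLt; omega⟩, ?_⟩
      rw [← hk]
      congr 1
      apply Fin.ext
      show r + (k.val - r) = k.val
      omega
  have hfmono : StrictMono (fun s : Fin (n - r) => C r ⟨r + s.val, by have := s.isLt; omega⟩) := by
    intro s s' hss
    have hss' : s.val < s'.val := hss
    dsimp only
    apply hr2
    · show r ≤ r + s.val
      omega
    · rw [Fin.lt_def]
      show r + s.val < r + s'.val
      omega
  have hgmono : StrictMono (fun s : Fin (n - r) => τ ⟨r + s.val, by have := s.isLt; omega⟩) := by
    intro s s' hss
    have hss' : s.val < s'.val := hss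
    dsimp only
    apply hτmono
    · show r ≤ r + s.val
      omega
    · rw [Fin.lt_def]
      show r + s.val < r + s'.val
      omega
  have hfg : (fun s : Fin (n - r) => C r ⟨r + s.val, by have := s.isLt; omega⟩)
      = (fun s : Fin (n - r) => τ ⟨r + s.val, by have := s.isLt; omega⟩) :=
    by
    apply (@StrictMono.range_inj (Fin (n - r)) (Fin n) _ _ (Finite.to_wellFoundedLT) _ _
      hfmono hgmono).mp
    rw [hchar (C r) (fun kk hkk => hr1 kk hkk), hchar τ hτlow]
  have hagree : C r = τ := by
    apply Equiv.ext
    intro k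
    rcases lt_or_ge k.val r with hk | hk
    · apply Fin.ext
      rw [hr1 k hk, hτlow k hk]
    · have h5 := congrFun hfg ⟨k.val - r, by have := k.isLt; omega⟩
      simp only [] at h5
      have hkeq : (⟨r + (k.val - r), by have := k.isLt; omega⟩ : Fin n) = k := Fin.ext (by
        show r + (k.val - r) = k.val
        omega)
      rw [← hkeq]
      exact h5
  have hsignC : ∀ t (htle : t ≤ r),
      Equiv.Perm.sign (C t) = (-1 : ℤˣ) ^ (∑ i ∈ Finset.range t, bv i) := by
    intro t
    induction t with
    | zero =>
      intro _
      rw [hC0]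
      simp
    | succ t ih =>
      intro ht
      have ht' : t < r := ht
      rw [hCs, _root_.map_mul, ih (by omega), hδ]
      simp only []
      rw [dif_pos ht', giambelliShiftCycle_sign]
      have hbvt : bv t = β ⟨t, ht'⟩ := by
        rw [hbv]
        simp only []
        rw [dif_pos ht']
      rw [Finset.sum_range_succ, pow_add, hbvt]
  have hsignτ : ((Equiv.Perm.sign τ : ℤ) : F) = (-1 : F) ^ (∑ j : Fin r, β j) := by
    rw [← hagree, hsignC r le_rfl]
    have hsum : ∑ i ∈ Finset.range r, bv i = ∑ j : Fin r, β j := by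
      rw [← Fin.sum_univ_eq_sum_range]
      apply Finset.sum_congr rfl
      intro j _
      rw [hbv]
      simp only []
      rw [dif_pos j.isLt]
    rw [hsum]
    push_cast
    norm_num
  set u : Fin r → Fin n → F := fun i jr => x jr ^ (α i + n) with hu
  have hlam : (Matrix.of fun jr k : Fin n => x jr ^ (l k + (n - 1 - k.val)))
      = (Matrix.of fun jr k : Fin n =>
          Function.extend p (fun i => u i jr) (fun k' => A jr k') k).submatrix id τ := by
    ext jr k
    rw [Matrix.submatrix_apply, id_eq, Matrix.of_apply, Matrix.of_apply, hτ, htf]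
    simp only []
    by_cases hk : k.val < r
    · rw [dif_pos hk, hp.extend_apply, hu]
      simp only []
      rw [hαl k hk]
      congr 1
      have := k.isLt
      omega
    · rw [dif_neg hk]
      have hnot : ¬ ∃ i, p i = (⟨k.val - l k, hsub_lt k⟩ : Fin n) := by
        rintro ⟨i, hi⟩
        have h3 : (β i : ℕ) = k.val - l k := by simpa [hp_def, Fin.mk.injEq] using hi
        exact hF1 i k (by omega) h3
      rw [Function.extend_apply' _ _ _ hnot, hAdef, Matrix.of_apply]
      congr 1
      have h1 := hrank k (by omega)
      have h2 := k.isLt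
      show l k + (n - 1 - k.val) = n - 1 - (k.val - l k)
      omega
  have hhookij : ∀ i j : Fin r, schurPoly n (hookPartition n (α i) (β j)) x
      = ((-1 : F) ^ (β j) * (A.updateCol (p j) (u i)).det) / A.det := by
    intro i j
    simp only [schurPoly]
    rw [giambelli_hook_det x (α i) (β j) (by have := hβn j; omega)]
  have hsyl := giambelli_sylvester_identity A hV u p hp
  have hRHS : (Matrix.of fun i j : Fin r => schurPoly n (hookPartition n (α i) (β j)) x)
      = Matrix.of fun i j : Fin r =>
          ((-1 : F) ^ (β j) / A.det) * (A.updateCol (p j) (u i)).det := by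
    ext i j
    rw [Matrix.of_apply, Matrix.of_apply, hhookij i j]
    ring
  rw [hRHS, Matrix.det_mul_row (fun j : Fin r => (-1 : F) ^ (β j) / A.det)
    (fun i j : Fin r => (A.updateCol (p j) (u i)).det)]
  simp only [schurPoly]
  rw [hlam, Matrix.det_permute' τ, hsignτ]
  have hprod : (∏ j : Fin r, ((-1 : F) ^ (β j) / A.det))
      = (-1 : F) ^ (∑ j : Fin r, β j) / A.det ^ r := by
    rw [Finset.prod_div_distrib, Finset.prod_pow_eq_pow_sum, Finset.prod_const,
      Finset.card_univ, Fintype.card_fin]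
  rw [hprod]
  have hD : Matrix.det (Matrix.of fun i j : Fin r => (A.updateCol (p j) (u i)).det)
      = A.det ^ r * Matrix.det (Matrix.of fun jr k : Fin n =>
          Function.extend p (fun i => u i jr) (fun k' => A jr k') k) / A.det := by
    rw [eq_div_iff hV]
    linear_combination hsyl
  have hof : (Matrix.det fun i j : Fin r => (A.updateCol (p j) (u i)).det)
      = Matrix.det (Matrix.of fun i j : Fin r => (A.updateCol (p j) (u i)).det) := rfl
  rw [hof, hD]
  have hpow : A.det ^ r ≠ 0 := pow_ne_zero r hV
  simp only [← hAdef]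
  field_simp
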